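/- arXiv:2403.01749 — 5 statements merged into one kernel-verified Lean document; each statement's English description precedes it below -/
import Mathlib

section
/- For all ε ≥ 0 and σ > 0, the quantity Φ(Δ/(2σ) − εσ/Δ) − e^ε·Φ(−Δ/(2σ) − εσ/Δ) is nonnegative, where Φ is the standard normal CDF and Δ > 0. -/
open MeasureTheory Real Set Filter

/-- The standard normal CDF. -/
noncomputable def stdΦ (x : ℝ) : ℝ :=
  (Real.sqrt (2 * Real.pi))⁻¹ * ∫ t in Set.Iic x, Real.exp (-t ^ 2 / 2)

theorem stmt0 (Δ σ ε : ℝ) (hΔ : 0 < Δ) (hσ : 0 < σ) (hε : 0 ≤ ε) :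
    0 ≤ stdΦ (Δ / (2 * σ) - ε * σ / Δ) - Real.exp ε * stdΦ (-(Δ / (2 * σ)) - ε * σ / Δ) := by
  set a : ℝ := Δ / (2 * σ) with ha
  set b : ℝ := ε * σ / Δ with hb
  have ha0 : 0 < a := by positivity
  have hb0 : 0 ≤ b := by positivity
  have hab : 2 * a * b = ε := by
    field_simp [ha, hb]
    rw [ha, hb]
    field_simp
  -- change of variables
  have hmp : MeasurePreserving (fun t : ℝ => t - 2 * a) volume volume :=
    measurePreserving_sub_right volume (2 * a)
  have hemb : MeasurableEmbedding (fun t : ℝ => t - 2 * a) :=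
    (MeasurableEquiv.subRight (2 * a)).measurableEmbedding
  have hpre : (fun t : ℝ => t - 2 * a) ⁻¹' Set.Iic (-a - b) = Set.Iic (a - b) := by
    ext t
    simp only [Set.mem_preimage, Set.mem_Iic]
    constructor <;> intro h <;> linarith
  have key : (∫ t in Set.Iic (-a - b), Real.exp (-t ^ 2 / 2))
      = ∫ t in Set.Iic (a - b), Real.exp (-(t - 2 * a) ^ 2 / 2) := by
    rw [← hmp.setIntegral_preimage_emb hemb (fun t => Real.exp (-t ^ 2 / 2)) (Set.Iic (-a - b)),
      hpre]
  -- integrability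
  have hint : Integrable (fun t : ℝ => Real.exp (-t ^ 2 / 2)) := by
    have := integrable_exp_neg_mul_sq (b := (1 : ℝ) / 2) (by norm_num)
    convert this using 2 with t
    ring_nf
  have hint2 : Integrable (fun t : ℝ => Real.exp ε * Real.exp (-(t - 2 * a) ^ 2 / 2)) := by
    exact ((hmp.integrable_comp_emb hemb).2 hint).const_mul _
  -- pointwise bound on Iic (a - b)
  have hmono : (∫ t in Set.Iic (a - b), Real.exp ε * Real.exp (-(t - 2 * a) ^ 2 / 2))
      ≤ ∫ t in Set.Iic (a - b), Real.exp (-t ^ 2 / 2) := by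
    apply setIntegral_mono_on hint2.integrableOn hint.integrableOn measurableSet_Iic
    intro t ht
    rw [Set.mem_Iic] at ht
    rw [← Real.exp_add]
    apply Real.exp_le_exp.2
    nlinarith [hab]
  have hΦ : Real.exp ε * stdΦ (-a - b) ≤ stdΦ (a - b) := by
    unfold stdΦ
    rw [key]
    rw [mul_left_comm, ← integral_const_mul]
    apply mul_le_mul_of_nonneg_left hmono
    positivity
  linarith
end

section
/- Fix Δ > 0 and ε ≥ 0. The function σ ↦ Φ(Δ/(2σ) − εσ/Δ) − e^ε·Φ(−Δ/(2σ) − εσ/Δ) is (weakly) monotone decreasing in σ on (0, ∞). -/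
open MeasureTheory Real Set Filter

lemma gauss_integrable : Integrable (fun t : ℝ => Real.exp (-t ^ 2 / 2)) := by
  have h : (fun t : ℝ => Real.exp (-t ^ 2 / 2)) = fun t : ℝ => Real.exp (-(1/2) * t ^ 2) := by
    funext t; ring_nf
  rw [h]
  exact integrable_exp_neg_mul_sq (by norm_num)

lemma gauss_cont : Continuous (fun t : ℝ => Real.exp (-t ^ 2 / 2)) := by continuity

lemma hasDerivAt_stdΦ (x : ℝ) :
    HasDerivAt stdΦ ((Real.sqrt (2 * Real.pi))⁻¹ * Real.exp (-x ^ 2 / 2)) x := by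
  have hint := gauss_integrable
  have key : stdΦ = fun y => (Real.sqrt (2 * Real.pi))⁻¹ *
      ((∫ t in Set.Iic (0:ℝ), Real.exp (-t ^ 2 / 2)) + ∫ t in (0:ℝ)..y, Real.exp (-t ^ 2 / 2)) := by
    funext y
    rw [stdΦ]
    congr 1
    rw [← intervalIntegral.integral_Iic_sub_Iic hint.integrableOn hint.integrableOn]
    ring
  rw [key]
  have hd : HasDerivAt (fun y => ∫ t in (0:ℝ)..y, Real.exp (-t ^ 2 / 2))
      (Real.exp (-x ^ 2 / 2)) x :=
    intervalIntegral.integral_hasDerivAt_right (hint.intervalIntegrable)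
      (gauss_cont.stronglyMeasurable.stronglyMeasurableAtFilter)
      gauss_cont.continuousAt
  exact ((hd.const_add _).const_mul _)

theorem stmt2 (Δ ε : ℝ) (hΔ : 0 < Δ) (hε : 0 ≤ ε) :
    AntitoneOn (fun σ : ℝ =>
      stdΦ (Δ / (2 * σ) - ε * σ / Δ) - Real.exp ε * stdΦ (-(Δ / (2 * σ)) - ε * σ / Δ))
      (Set.Ioi 0) := by
  set c : ℝ := (Real.sqrt (2 * Real.pi))⁻¹ with hc
  have hc0 : 0 ≤ c := inv_nonneg.2 (Real.sqrt_nonneg _)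
  have hderiv : ∀ σ : ℝ, σ ∈ Set.Ioi (0:ℝ) →
      HasDerivAt (fun σ : ℝ =>
        stdΦ (Δ / (2 * σ) - ε * σ / Δ) - Real.exp ε * stdΦ (-(Δ / (2 * σ)) - ε * σ / Δ))
        (c * Real.exp (-(Δ / (2 * σ) - ε * σ / Δ) ^ 2 / 2) * (-(Δ / (2 * σ ^ 2)) - ε / Δ)
        - Real.exp ε * (c * Real.exp (-(-(Δ / (2 * σ)) - ε * σ / Δ) ^ 2 / 2)
            * (Δ / (2 * σ ^ 2) - ε / Δ))) σ := by
    intro σ hσ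
    have hσ0 : (0:ℝ) < σ := hσ
    have hσne : σ ≠ 0 := ne_of_gt hσ0
    have h1 : HasDerivAt (fun σ : ℝ => Δ / (2 * σ)) (-(Δ / (2 * σ ^ 2))) σ := by
      have h := (hasDerivAt_inv hσne).const_mul (Δ / 2)
      have e1 : (fun σ : ℝ => Δ / (2 * σ)) = fun y => Δ / 2 * y⁻¹ := by
        funext x; rw [div_eq_mul_inv, mul_inv]; ring
      have e2 : -(Δ / (2 * σ ^ 2)) = Δ / 2 * -(σ ^ 2)⁻¹ := by ring
      rw [e1, e2]; exact h
    have h2 : HasDerivAt (fun σ : ℝ => ε * σ / Δ) (ε / Δ) σ := by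
      have h := ((hasDerivAt_id σ).const_mul ε).div_const Δ
      simpa using h
    have ha := (hasDerivAt_stdΦ (Δ / (2 * σ) - ε * σ / Δ)).comp σ (h1.sub h2)
    have hb := ((hasDerivAt_stdΦ (-(Δ / (2 * σ)) - ε * σ / Δ)).comp σ
        (h1.neg.sub h2)).const_mul (Real.exp ε)
    have := ha.sub hb
    refine this.congr_deriv ?_
    ring
  apply antitoneOn_of_deriv_nonpos (convex_Ioi 0)
  · intro x hx
    exact (hderiv x hx).continuousAt.continuousWithinAt
  · rw [interior_Ioi]
    intro x hx
    exact (hderiv x hx).differentiableAt.differentiableWithinAt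
  · rw [interior_Ioi]
    intro σ hσ
    rw [(hderiv σ hσ).deriv]
    have hσ0 : (0:ℝ) < σ := hσ
    have hσne : σ ≠ 0 := ne_of_gt hσ0
    set a := Δ / (2 * σ) - ε * σ / Δ with hadef
    set b := -(Δ / (2 * σ)) - ε * σ / Δ with hbdef
    have hid : Real.exp ε * Real.exp (-b ^ 2 / 2) = Real.exp (-a ^ 2 / 2) := by
      rw [← Real.exp_add]
      congr 1
      rw [hadef, hbdef]
      field_simp
      ring
    have hrw : c * Real.exp (-a ^ 2 / 2) * (-(Δ / (2 * σ ^ 2)) - ε / Δ)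
        - Real.exp ε * (c * Real.exp (-b ^ 2 / 2) * (Δ / (2 * σ ^ 2) - ε / Δ))
        = c * Real.exp (-a ^ 2 / 2) * (-(Δ / σ ^ 2)) := by
      linear_combination c * (ε / Δ - Δ / (2 * σ ^ 2)) * hid
    rw [hrw]
    have h1 : 0 ≤ c * Real.exp (-a ^ 2 / 2) := mul_nonneg hc0 (Real.exp_pos _).le
    have h2 : 0 < Δ / σ ^ 2 := div_pos hΔ (by positivity)
    nlinarith
end

section
/- For Δ > 0 and σ > 0, as ε → ∞, Φ(Δ/(2σ) − εσ/Δ) − e^ε·Φ(−Δ/(2σ) − εσ/Δ) tends to 0. -/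
open MeasureTheory Real Set Filter

lemma lin_tendsto_atBot (c d : ℝ) (hd : 0 < d) :
    Tendsto (fun ε : ℝ => c - ε * d) atTop atBot := by
  have h1 : Tendsto (fun ε : ℝ => ε * d) atTop atTop :=
    Tendsto.atTop_mul_const hd tendsto_id
  have h2 := tendsto_neg_atTop_atBot.comp h1
  have h3 := tendsto_atBot_add_const_left atTop c h2
  exact h3.congr fun ε => by simp [Function.comp, sub_eq_add_neg]

lemma stdΦ_nonneg (x : ℝ) : 0 ≤ stdΦ x := by
  apply mul_nonneg (by positivity)
  apply setIntegral_nonneg measurableSet_Iic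
  intro t _
  positivity

lemma stdΦ_neg_le {x : ℝ} (hx : 0 ≤ x) : stdΦ (-x) ≤ Real.exp (-x ^ 2 / 2) := by
  have hg : Integrable (fun t : ℝ => Real.exp (-x ^ 2 / 2) * Real.exp (-(t + x) ^ 2 / 2)) :=
    (gauss_integrable.comp_add_right x).const_mul _
  have h1 : (∫ t in Set.Iic (-x), Real.exp (-t ^ 2 / 2))
      ≤ ∫ t in Set.Iic (-x), Real.exp (-x ^ 2 / 2) * Real.exp (-(t + x) ^ 2 / 2) := by
    apply setIntegral_mono_on gauss_integrable.integrableOn hg.integrableOn measurableSet_Iic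
    intro t ht
    rw [← Real.exp_add, Real.exp_le_exp]
    simp only [Set.mem_Iic] at ht
    nlinarith [sq_nonneg (t + x)]
  have h2 : (∫ t in Set.Iic (-x), Real.exp (-x ^ 2 / 2) * Real.exp (-(t + x) ^ 2 / 2))
      ≤ ∫ t : ℝ, Real.exp (-x ^ 2 / 2) * Real.exp (-(t + x) ^ 2 / 2) := by
    apply setIntegral_le_integral hg
    filter_upwards with t; positivity
  have h3 : (∫ t : ℝ, Real.exp (-x ^ 2 / 2) * Real.exp (-(t + x) ^ 2 / 2))
      = Real.exp (-x ^ 2 / 2) * Real.sqrt (2 * Real.pi) := by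
    rw [MeasureTheory.integral_const_mul]
    congr 1
    rw [integral_add_right_eq_self (fun t : ℝ => Real.exp (-t ^ 2 / 2)) x]
    have := integral_gaussian (1/2)
    have heq : ∀ t : ℝ, Real.exp (-(1/2) * t ^ 2) = Real.exp (-t ^ 2 / 2) := by
      intro t; ring_nf
    simp_rw [heq] at this
    rw [this]
    congr 1
    rw [div_div_eq_mul_div, div_one, mul_comm]
  have hpos : 0 < Real.sqrt (2 * Real.pi) := Real.sqrt_pos.mpr (by positivity)
  calc stdΦ (-x) ≤ (Real.sqrt (2 * Real.pi))⁻¹ * (Real.exp (-x ^ 2 / 2) * Real.sqrt (2 * Real.pi)) := by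
        unfold stdΦ
        apply mul_le_mul_of_nonneg_left _ (by positivity)
        rw [← h3]; exact h1.trans h2
    _ = Real.exp (-x ^ 2 / 2) := by field_simp

lemma stdΦ_tendsto_atBot : Tendsto stdΦ atBot (nhds 0) := by
  have hsq : Tendsto (fun x : ℝ => x ^ 2) atBot atTop := by
    have h := (tendsto_pow_atTop (n := 2) (by norm_num)).comp tendsto_neg_atBot_atTop (α := ℝ)
    exact h.congr fun x => by simp [Function.comp, neg_sq]
  have h2 : Tendsto (fun x : ℝ => -x ^ 2 / 2) atBot atBot := by
    apply Tendsto.atBot_div_const (by norm_num : (0:ℝ) < 2)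
    exact tendsto_neg_atTop_atBot.comp hsq
  have hb : Tendsto (fun x : ℝ => Real.exp (-x ^ 2 / 2)) atBot (nhds 0) :=
    Real.tendsto_exp_atBot.comp h2
  have key : ∀ᶠ x : ℝ in atBot, stdΦ x ≤ Real.exp (-x ^ 2 / 2) := by
    filter_upwards [eventually_le_atBot (0:ℝ)] with x hx
    have := stdΦ_neg_le (x := -x) (by linarith)
    simpa using this
  have key0 : ∀ᶠ x : ℝ in atBot, (0:ℝ) ≤ stdΦ x := Eventually.of_forall stdΦ_nonneg
  exact tendsto_of_tendsto_of_tendsto_of_le_of_le' tendsto_const_nhds hb key0 key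

theorem stmt4 (Δ σ : ℝ) (hΔ : 0 < Δ) (hσ : 0 < σ) :
    Filter.Tendsto (fun ε : ℝ =>
      stdΦ (Δ / (2 * σ) - ε * σ / Δ) - Real.exp ε * stdΦ (-(Δ / (2 * σ)) - ε * σ / Δ))
      Filter.atTop (nhds 0) := by
  have hA : Tendsto (fun ε : ℝ => stdΦ (Δ / (2 * σ) - ε * σ / Δ)) atTop (nhds 0) := by
    apply stdΦ_tendsto_atBot.comp
    have := lin_tendsto_atBot (Δ / (2 * σ)) (σ / Δ) (by positivity)
    exact this.congr fun ε => by rw [mul_div_assoc]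
  have hB : Tendsto (fun ε : ℝ => Real.exp ε * stdΦ (-(Δ / (2 * σ)) - ε * σ / Δ)) atTop (nhds 0) := by
    have hg : Tendsto (fun ε : ℝ => Real.exp (ε + -(Δ / (2 * σ) + ε * σ / Δ) ^ 2 / 2)) atTop (nhds 0) := by
      apply Real.tendsto_exp_atBot.comp
      have hexp : ∀ ε : ℝ, ε + -(Δ / (2 * σ) + ε * σ / Δ) ^ 2 / 2
          = ε * (1/2 - ε * (σ ^ 2 / (2 * Δ ^ 2))) + -(Δ ^ 2 / (8 * σ ^ 2)) := by
        intro ε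
        field_simp
        ring
      simp_rw [hexp]
      apply tendsto_atBot_add_const_right
      exact Filter.Tendsto.atTop_mul_atBot₀ tendsto_id
        (lin_tendsto_atBot (1/2) (σ ^ 2 / (2 * Δ ^ 2)) (by positivity))
    have hub : ∀ᶠ ε : ℝ in atTop, Real.exp ε * stdΦ (-(Δ / (2 * σ)) - ε * σ / Δ)
        ≤ Real.exp (ε + -(Δ / (2 * σ) + ε * σ / Δ) ^ 2 / 2) := by
      filter_upwards [eventually_ge_atTop (0:ℝ)] with ε hε
      have hx : (0:ℝ) ≤ Δ / (2 * σ) + ε * σ / Δ := by positivity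
      have hle := stdΦ_neg_le hx
      rw [Real.exp_add]
      have harg : -(Δ / (2 * σ)) - ε * σ / Δ = -(Δ / (2 * σ) + ε * σ / Δ) := by ring
      rw [harg]
      exact mul_le_mul_of_nonneg_left hle (Real.exp_pos ε).le
    have hlb : ∀ᶠ ε : ℝ in atTop, (0:ℝ) ≤ Real.exp ε * stdΦ (-(Δ / (2 * σ)) - ε * σ / Δ) :=
      Eventually.of_forall fun ε => mul_nonneg (Real.exp_pos ε).le (stdΦ_nonneg _)
    exact tendsto_of_tendsto_of_tendsto_of_le_of_le' tendsto_const_nhds hg hlb hub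
  simpa using hA.sub hB
end

section
/- For a > 0 and ε ≥ 0, Φ(a/2 − ε/a) − e^ε·Φ(−a/2 − ε/a) is strictly increasing in a on (0, ∞), where Φ is the standard normal CDF. -/
open MeasureTheory Real Set Filter

theorem stmt10 (ε : ℝ) (hε : 0 ≤ ε) :
    StrictMonoOn (fun a : ℝ =>
      stdΦ (a / 2 - ε / a) - Real.exp ε * stdΦ (-(a / 2) - ε / a)) (Set.Ioi 0) := by
  have hderiv : ∀ a : ℝ, 0 < a → HasDerivAt (fun a : ℝ =>
      stdΦ (a / 2 - ε / a) - Real.exp ε * stdΦ (-(a / 2) - ε / a))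
      ((Real.sqrt (2 * Real.pi))⁻¹ * Real.exp (-(a / 2 - ε / a) ^ 2 / 2)) a := by
    intro a ha
    have ha' : a ≠ 0 := ne_of_gt ha
    have hu : HasDerivAt (fun a : ℝ => a / 2 - ε / a) (1/2 + ε / a ^ 2) a := by
      have h1 : HasDerivAt (fun a : ℝ => a / 2) (1/2) a := by
        simpa using (hasDerivAt_id a).div_const 2
      have h2 : HasDerivAt (fun a : ℝ => ε / a) (-(ε / a ^ 2)) a := by
        have := (hasDerivAt_inv ha').const_mul ε
        simpa [div_eq_mul_inv, mul_neg] using this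
      exact (h1.sub h2).congr_deriv (by ring)
    have hv : HasDerivAt (fun a : ℝ => -(a / 2) - ε / a) (-(1/2) + ε / a ^ 2) a := by
      have h1 : HasDerivAt (fun a : ℝ => -(a / 2)) (-(1/2)) a := by
        exact ((hasDerivAt_id a).div_const 2).neg.congr_deriv (by norm_num)
      have h2 : HasDerivAt (fun a : ℝ => ε / a) (-(ε / a ^ 2)) a := by
        have := (hasDerivAt_inv ha').const_mul ε
        simpa [div_eq_mul_inv, mul_neg] using this
      exact (h1.sub h2).congr_deriv (by ring)
    have H1 := (hasDerivAt_stdΦ (a / 2 - ε / a)).comp a hu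
    have H2 := ((hasDerivAt_stdΦ (-(a / 2) - ε / a)).comp a hv).const_mul (Real.exp ε)
    have H := H1.sub H2
    refine H.congr_deriv ?_
    have hid : Real.exp ε * Real.exp (-(-(a / 2) - ε / a) ^ 2 / 2)
        = Real.exp (-(a / 2 - ε / a) ^ 2 / 2) := by
      rw [← Real.exp_add]
      congr 1
      field_simp
      ring
    set c := (Real.sqrt (2 * Real.pi))⁻¹
    rw [show Real.exp ε * (c * Real.exp (-(-(a / 2) - ε / a) ^ 2 / 2) * (-(1/2) + ε / a ^ 2))
        = c * (Real.exp ε * Real.exp (-(-(a / 2) - ε / a) ^ 2 / 2)) * (-(1/2) + ε / a ^ 2) by ring,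
      hid]
    ring
  have hconv : Convex ℝ (Set.Ioi (0:ℝ)) := convex_Ioi 0
  refine StrictMonoOn.mono (strictMonoOn_of_deriv_pos hconv ?_ ?_) (le_refl _)
  · intro a ha
    exact ((hderiv a ha).continuousAt).continuousWithinAt
  · intro a ha
    rw [interior_Ioi] at ha
    rw [(hderiv a ha).deriv]
    positivity
end

section
/- The total variation distance between N(0, σ²) and N(Δ, σ²) on ℝ equals 2Φ(Δ/(2σ)) − 1, for Δ > 0, σ > 0. -/
open MeasureTheory Real Set ProbabilityTheory

/-- Total variation distance between two measures. -/
noncomputable def tvDist (P Q : Measure ℝ) : ℝ :=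
  ⨆ A : {A : Set ℝ // MeasurableSet A}, |(P A.1).toReal - (Q A.1).toReal|

lemma gauss_std_Iic (c : ℝ) : ((gaussianReal 0 1) (Set.Iic c)).toReal = stdΦ c := by
  rw [gaussianReal_apply_eq_integral _ one_ne_zero,
    ENNReal.toReal_ofReal (setIntegral_nonneg measurableSet_Iic
      fun x _ => gaussianPDFReal_nonneg _ _ _)]
  unfold stdΦ gaussianPDFReal
  simp only [NNReal.coe_one, mul_one, sub_zero]
  rw [integral_const_mul]

lemma gauss_Iic (μ : ℝ) {σ : ℝ} (hσ : 0 < σ) (a : ℝ) :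
    ((gaussianReal μ ((σ ^ 2).toNNReal)) (Set.Iic a)).toReal = stdΦ ((a - μ) / σ) := by
  have hmap : (gaussianReal 0 1).map (fun x => σ * x + μ)
      = gaussianReal μ ((σ ^ 2).toNNReal) := by
    have h1 := gaussianReal_map_const_mul (μ := 0) (v := 1) σ
    have hcomp : ((gaussianReal 0 1).map (fun x => σ * x)).map (fun x => x + μ)
        = (gaussianReal 0 1).map (fun x => σ * x + μ) := by
      rw [Measure.map_map (measurable_add_const μ) (measurable_const_mul σ)]
      rfl
    rw [← hcomp, h1, gaussianReal_map_add_const]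
    congr 1
    · ring
    · ext
      simp [Real.coe_toNNReal _ (sq_nonneg σ)]
  rw [← hmap, Measure.map_apply (by fun_prop) measurableSet_Iic]
  have hpre : (fun x => σ * x + μ) ⁻¹' (Set.Iic a) = Set.Iic ((a - μ) / σ) := by
    ext x
    simp only [Set.mem_preimage, Set.mem_Iic]
    rw [le_div_iff₀ hσ]
    constructor <;> intro h <;> nlinarith
  rw [hpre, gauss_std_Iic]

lemma stdΦ_neg (c : ℝ) : stdΦ (-c) = 1 - stdΦ c := by
  have h1 : ((gaussianReal 0 1) (Set.Iic (-c))).toReal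
      = ((gaussianReal 0 1) (Set.Ioi c)).toReal := by
    rw [gaussianReal_apply_eq_integral _ one_ne_zero,
      gaussianReal_apply_eq_integral _ one_ne_zero]
    refine congrArg ENNReal.toReal (congrArg ENNReal.ofReal ?_)
    rw [← integral_comp_neg_Ioi]
    apply setIntegral_congr_fun measurableSet_Ioi
    intro x _
    simp [gaussianPDFReal, neg_sq]
  have h2 : ((gaussianReal 0 1) (Set.Ioi c)).toReal
      = 1 - ((gaussianReal 0 1) (Set.Iic c)).toReal := by
    have := measure_compl (μ := gaussianReal 0 1) (measurableSet_Iic (a := c)) (measure_ne_top _ _)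
    rw [compl_Iic] at this
    rw [this, measure_univ, ENNReal.toReal_sub_of_le prob_le_one ENNReal.one_ne_top,
      ENNReal.toReal_one]
  rw [← gauss_std_Iic, h1, h2, gauss_std_Iic]

theorem stmt18 (Δ σ : ℝ) (hΔ : 0 < Δ) (hσ : 0 < σ) :
    tvDist (gaussianReal 0 ((σ ^ 2).toNNReal)) (gaussianReal Δ ((σ ^ 2).toNNReal))
      = 2 * stdΦ (Δ / (2 * σ)) - 1 := by
  set v := (σ ^ 2).toNNReal with hv_def
  have hvc : (NNReal.toReal v) = σ ^ 2 := Real.coe_toNNReal _ (sq_nonneg σ)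
  have hv : v ≠ 0 := by
    rw [hv_def, ← NNReal.coe_ne_zero, Real.coe_toNNReal _ (sq_nonneg σ)]
    positivity
  set p := gaussianPDFReal 0 v with hp_def
  set q := gaussianPDFReal Δ v with hq_def
  have hpint : Integrable p := integrable_gaussianPDFReal 0 v
  have hqint : Integrable q := integrable_gaussianPDFReal Δ v
  have hfint : Integrable (fun x => q x - p x) := hqint.sub hpint
  have hPA : ∀ A : Set ℝ, MeasurableSet A →
      ((gaussianReal 0 v) A).toReal = ∫ x in A, p x := by
    intro A hA
    rw [gaussianReal_apply_eq_integral _ hv,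
      ENNReal.toReal_ofReal (setIntegral_nonneg hA fun x _ => gaussianPDFReal_nonneg _ _ _)]
  have hQA : ∀ A : Set ℝ, MeasurableSet A →
      ((gaussianReal Δ v) A).toReal = ∫ x in A, q x := by
    intro A hA
    rw [gaussianReal_apply_eq_integral _ hv,
      ENNReal.toReal_ofReal (setIntegral_nonneg hA fun x _ => gaussianPDFReal_nonneg _ _ _)]
  have hvpos : (0:ℝ) < NNReal.toReal v := by rw [hvc]; positivity
  have hsign : ∀ x : ℝ, p x ≤ q x ↔ Δ / 2 ≤ x := by
    intro x
    rw [hp_def, hq_def]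
    unfold gaussianPDFReal
    rw [mul_le_mul_iff_right₀ (by positivity), Real.exp_le_exp,
      div_le_div_iff_of_pos_right (by positivity : (0:ℝ) < 2 * NNReal.toReal v), neg_le_neg_iff]
    constructor <;> intro h <;> nlinarith
  set m := Δ / 2 with hm_def
  set D := ∫ x in Set.Ici m, (q x - p x) with hD_def
  have hbound : ∀ A : Set ℝ, MeasurableSet A → ∫ x in A, (q x - p x) ≤ D := by
    intro A hA
    have h1 : ∫ x in A, (q x - p x)
        = (∫ x in A ∩ Set.Ici m, (q x - p x)) + ∫ x in A \ Set.Ici m, (q x - p x) :=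
      (integral_inter_add_diff measurableSet_Ici hfint.integrableOn).symm
    have h2 : ∫ x in A \ Set.Ici m, (q x - p x) ≤ 0 := by
      refine setIntegral_nonpos (hA.diff measurableSet_Ici) fun x hx => ?_
      have : ¬ (m ≤ x) := hx.2
      exact sub_nonpos.2 (le_of_not_ge fun h => this ((hsign x).1 h))
    have h3 : ∫ x in A ∩ Set.Ici m, (q x - p x) ≤ D := by
      rw [hD_def]
      refine setIntegral_mono_set hfint.integrableOn
        ((ae_restrict_iff' measurableSet_Ici).2 (ae_of_all _ fun x hx =>
          sub_nonneg.2 ((hsign x).2 hx)))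
        (HasSubset.Subset.eventuallyLE Set.inter_subset_right)
    linarith
  have habs : ∀ A : Set ℝ, MeasurableSet A →
      |((gaussianReal 0 v) A).toReal - ((gaussianReal Δ v) A).toReal| ≤ D := by
    intro A hA
    rw [hPA A hA, hQA A hA, abs_sub_le_iff]
    have hAsub : ∫ x in A, (q x - p x) = (∫ x in A, q x) - ∫ x in A, p x :=
      integral_sub hqint.integrableOn hpint.integrableOn
    have hAcsub : ∫ x in Aᶜ, (q x - p x) = (∫ x in Aᶜ, q x) - ∫ x in Aᶜ, p x :=
      integral_sub hqint.integrableOn hpint.integrableOn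
    have htot : (∫ x in A, (q x - p x)) + (∫ x in Aᶜ, (q x - p x)) = 0 := by
      rw [integral_add_compl hA hfint, integral_sub hqint hpint,
        integral_gaussianPDFReal_eq_one Δ hv, integral_gaussianPDFReal_eq_one 0 hv]
      ring
    have hb1 := hbound A hA
    have hb2 := hbound Aᶜ hA.compl
    constructor <;> linarith
  have hIicP : ∫ x in Set.Iic m, p x = stdΦ (Δ / (2 * σ)) := by
    rw [← hPA _ measurableSet_Iic, hv_def, gauss_Iic 0 hσ]
    congr 1
    rw [hm_def]
    field_simp
    ring
  have hIicQ : ∫ x in Set.Iic m, q x = 1 - stdΦ (Δ / (2 * σ)) := by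
    rw [← hQA _ measurableSet_Iic, hv_def, gauss_Iic Δ hσ]
    have harg : (m - Δ) / σ = -(Δ / (2 * σ)) := by
      rw [hm_def]; field_simp; ring
    rw [harg, stdΦ_neg]
  have hIciP : ∫ x in Set.Ici m, p x = 1 - stdΦ (Δ / (2 * σ)) := by
    have := integral_add_compl (measurableSet_Iic (a := m)) hpint
    rw [compl_Iic, integral_gaussianPDFReal_eq_one 0 hv] at this
    rw [integral_Ici_eq_integral_Ioi]
    linarith [hIicP]
  have hIciQ : ∫ x in Set.Ici m, q x = stdΦ (Δ / (2 * σ)) := by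
    have := integral_add_compl (measurableSet_Iic (a := m)) hqint
    rw [compl_Iic, integral_gaussianPDFReal_eq_one Δ hv] at this
    rw [integral_Ici_eq_integral_Ioi]
    linarith [hIicQ]
  have hIcisub : ∫ x in Set.Ici m, (q x - p x)
      = (∫ x in Set.Ici m, q x) - ∫ x in Set.Ici m, p x :=
    integral_sub hqint.integrableOn hpint.integrableOn
  have hD : D = 2 * stdΦ (Δ / (2 * σ)) - 1 := by
    rw [hD_def, hIcisub, hIciP, hIciQ]; ring
  rw [tvDist, ← hD]
  apply le_antisymm
  · exact ciSup_le fun A => habs A.1 A.2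
  · have hb : BddAbove (Set.range fun A : {A : Set ℝ // MeasurableSet A} =>
        |((gaussianReal 0 v) A.1).toReal - ((gaussianReal Δ v) A.1).toReal|) := by
      refine ⟨D, ?_⟩
      rintro x ⟨A, rfl⟩
      exact habs A.1 A.2
    refine le_trans ?_ (le_ciSup hb ⟨Set.Ici m, measurableSet_Ici⟩)
    rw [hPA _ measurableSet_Ici, hQA _ measurableSet_Ici, abs_sub_comm,
      abs_of_nonneg (by
        rw [← hIcisub]
        exact setIntegral_nonneg measurableSet_Ici fun x hx =>
          sub_nonneg.2 ((hsign x).2 hx))]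
    rw [← hIcisub]
end
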